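/- Let h : [0,1] → ℝ be a concave continuous function with h(0) = h(1) = 0 that is absolutely continuous with a.e. derivative h′ ∈ L²((0,1)) not a.e. equal to zero, and write ‖h′‖₂ = (∫₀¹ h′(p)² dp)^{1/2}. Let m ∈ ℝ and s > 0, and define Q*(p) = m + s·h′(1−p)/‖h′‖₂ for p ∈ (0,1). Then: (i) Q* is (a.e. equal to) a nondecreasing function on (0,1); (ii) ∫₀¹ Q*(p) dp = m; (iii) ∫₀¹ (Q*(p) − m)² dp = s²; and (iv) ∫₀¹ Q*(1−p)·h′(p) dp = s·‖h′‖₂. -/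

import Mathlib

open MeasureTheory Set Filter Topology

/-- Attainment half of Lemma 3.2: the quantile function
`Q*(p) = m + s·h′(1−p)/‖h′‖₂` is (a.e.) nondecreasing on `(0,1)`, has mean `m`,
variance `s²`, and achieves the maximal Choquet regularizer value `s·‖h′‖₂`. -/
theorem stmt_11 (h h' : ℝ → ℝ)
    (hconc : ConcaveOn ℝ (Set.Icc 0 1) h)
    (hcont : ContinuousOn h (Set.Icc 0 1))
    (h0 : h 0 = 0) (h1 : h 1 = 0)
    (hAC : ∀ x ∈ Set.Icc (0 : ℝ) 1, h x = ∫ p in (0 : ℝ)..x, h' p)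
    (hint : IntegrableOn h' (Set.Ioo 0 1))
    (hL2 : IntegrableOn (fun p => h' p ^ 2) (Set.Ioo 0 1))
    (hne : ¬ ∀ᵐ p ∂(volume.restrict (Set.Ioo (0 : ℝ) 1)), h' p = 0)
    (m s : ℝ) (hs : 0 < s) :
    let norm2 : ℝ := Real.sqrt (∫ p in Set.Ioo (0 : ℝ) 1, h' p ^ 2)
    let Qstar : ℝ → ℝ := fun p => m + s * h' (1 - p) / norm2
    (∃ g : ℝ → ℝ, MonotoneOn g (Set.Ioo 0 1) ∧
      ∀ᵐ p ∂(volume.restrict (Set.Ioo (0 : ℝ) 1)), Qstar p = g p) ∧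
    (∫ p in Set.Ioo (0 : ℝ) 1, Qstar p = m) ∧
    (∫ p in Set.Ioo (0 : ℝ) 1, (Qstar p - m) ^ 2 = s ^ 2) ∧
    (∫ p in Set.Ioo (0 : ℝ) 1, Qstar (1 - p) * h' p = s * norm2) := by
  intro norm2 Qstar
  classical
  -- basic integrability
  have hII : IntervalIntegrable h' volume 0 1 :=
    (intervalIntegrable_iff_integrableOn_Ioo_of_le zero_le_one).2 hint
  have hII2 : IntervalIntegrable (fun p => h' p ^ 2) volume 0 1 :=
    (intervalIntegrable_iff_integrableOn_Ioo_of_le zero_le_one).2 hL2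
  have hIIr : IntervalIntegrable (fun p => h' (1 - p)) volume 0 1 := by
    simpa using (hII.comp_sub_left 1).symm
  have hII2r : IntervalIntegrable (fun p => h' (1 - p) ^ 2) volume 0 1 := by
    simpa using (hII2.comp_sub_left 1).symm
  -- set integrals over Ioo as interval integrals
  have hIoo : ∀ F : ℝ → ℝ, (∫ p in Set.Ioo (0:ℝ) 1, F p) = ∫ p in (0:ℝ)..1, F p := by
    intro F
    rw [intervalIntegral.integral_of_le zero_le_one, setIntegral_congr_set Ioo_ae_eq_Ioc]
  -- the integral of h' over (0,1) vanishes
  have hzero : (∫ p in (0:ℝ)..1, h' p) = 0 := by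
    have := hAC 1 (by simp)
    rw [h1] at this; exact this.symm
  have hzeror : (∫ p in (0:ℝ)..1, h' (1 - p)) = 0 := by
    rw [intervalIntegral.integral_comp_sub_left h' 1]
    simpa using hzero
  -- positivity of the L² norm
  have hI2nn : 0 ≤ᵐ[volume.restrict (Set.Ioo (0:ℝ) 1)] fun p => h' p ^ 2 :=
    Filter.Eventually.of_forall fun p => sq_nonneg _
  have hposI : 0 < ∫ p in Set.Ioo (0:ℝ) 1, h' p ^ 2 := by
    rcases lt_or_eq_of_le (integral_nonneg_of_ae hI2nn) with hlt | heq
    · exact hlt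
    · exfalso
      apply hne
      have := (integral_eq_zero_iff_of_nonneg_ae hI2nn hL2).1 heq.symm
      filter_upwards [this] with p hp
      exact pow_eq_zero_iff (by norm_num) |>.1 hp
  have hn2sq : norm2 ^ 2 = ∫ p in Set.Ioo (0:ℝ) 1, h' p ^ 2 := Real.sq_sqrt hposI.le
  have hn2pos : 0 < norm2 := Real.sqrt_pos.2 hposI
  have hI2 : (∫ p in (0:ℝ)..1, h' p ^ 2) = norm2 ^ 2 := by rw [hn2sq, hIoo]
  have hI2r : (∫ p in (0:ℝ)..1, h' (1 - p) ^ 2) = norm2 ^ 2 := by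
    rw [intervalIntegral.integral_comp_sub_left (fun q => h' q ^ 2) 1]
    simpa using hI2
  -- (ii) mean
  have hmean : (∫ p in Set.Ioo (0:ℝ) 1, Qstar p) = m := by
    rw [hIoo]
    show (∫ p in (0:ℝ)..1, (m + s * h' (1 - p) / norm2)) = m
    rw [intervalIntegral.integral_add intervalIntegrable_const
      ((hIIr.const_mul s).div_const norm2)]
    simp [intervalIntegral.integral_div, intervalIntegral.integral_const_mul, hzeror]
  -- (iii) variance
  have hvar : (∫ p in Set.Ioo (0:ℝ) 1, (Qstar p - m) ^ 2) = s ^ 2 := by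
    rw [hIoo]
    show (∫ p in (0:ℝ)..1, (m + s * h' (1 - p) / norm2 - m) ^ 2) = s ^ 2
    have e : ∀ p : ℝ, (m + s * h' (1 - p) / norm2 - m) ^ 2
        = (s / norm2) ^ 2 * h' (1 - p) ^ 2 := by intro p; ring
    simp_rw [e]
    rw [intervalIntegral.integral_const_mul, hI2r]
    field_simp
  -- (iv) Choquet value
  have hchoq : (∫ p in Set.Ioo (0:ℝ) 1, Qstar (1 - p) * h' p) = s * norm2 := by
    rw [hIoo]
    show (∫ p in (0:ℝ)..1, (m + s * h' (1 - (1 - p)) / norm2) * h' p) = s * norm2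
    have e : ∀ p : ℝ, (m + s * h' (1 - (1 - p)) / norm2) * h' p
        = m * h' p + (s / norm2) * h' p ^ 2 := by intro p; simp only [sub_sub_cancel]; ring
    simp_rw [e]
    rw [intervalIntegral.integral_add (hII.const_mul m) (hII2.const_mul (s / norm2)),
      intervalIntegral.integral_const_mul, intervalIntegral.integral_const_mul, hzero, hI2]
    field_simp
    ring
  refine ⟨?_, hmean, hvar, hchoq⟩
  -- Part (i): a.e. monotone rearrangement
  set f : ℝ → ℝ := (Set.Ioo (0:ℝ) 1).indicator h' with hf_def
  have hfInt : Integrable f volume := hint.integrable_indicator measurableSet_Ioo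
  have hLeb : ∀ᵐ x ∂(volume : Measure ℝ),
      Tendsto (fun a => ⨍ y in a, f y)
        ((IsUnifLocDoublingMeasure.vitaliFamily (volume : Measure ℝ) 1).filterAt x)
        (𝓝 (f x)) :=
    VitaliFamily.ae_tendsto_average _ hfInt.locallyIntegrable
  set P : ℝ → Prop := fun x => Tendsto (fun a => ⨍ y in a, f y)
      ((IsUnifLocDoublingMeasure.vitaliFamily (volume : Measure ℝ) 1).filterAt x)
      (𝓝 (f x)) with hP_def
  -- On good points of (0,1), slopes from the right converge to h'
  have hslope : ∀ x ∈ Set.Ioo (0:ℝ) 1, P x →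
      Tendsto (fun y => (h y - h x) / (y - x)) (𝓝[>] x) (𝓝 (h' x)) := by
    intro x hx hPx
    have h1' : Tendsto (fun y => ⨍ t in Set.Icc x y, f t) (𝓝[>] x) (𝓝 (f x)) :=
      hPx.comp (Real.tendsto_Icc_vitaliFamily_right x)
    have hfx : f x = h' x := Set.indicator_of_mem hx _
    rw [hfx] at h1'
    refine h1'.congr' ?_
    filter_upwards [Ioo_mem_nhdsGT_of_mem (⟨le_rfl, hx.2⟩ : x ∈ Set.Ico x 1)] with y hy
    have hxy : x < y := hy.1
    have hsub : Set.Icc x y ⊆ Set.Ioo (0:ℝ) 1 := fun t ht =>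
      ⟨lt_of_lt_of_le hx.1 ht.1, lt_of_le_of_lt ht.2 hy.2⟩
    have e1 : (∫ t in Set.Icc x y, f t) = ∫ t in Set.Icc x y, h' t :=
      setIntegral_congr_fun measurableSet_Icc fun t ht => Set.indicator_of_mem (hsub ht) _
    have e2 : (∫ t in Set.Icc x y, h' t) = ∫ t in x..y, h' t := by
      rw [intervalIntegral.integral_of_le hxy.le]
      exact (setIntegral_congr_set Ioc_ae_eq_Icc).symm
    have hIx : IntervalIntegrable h' volume 0 x := hII.mono_set (by
      rw [Set.uIcc_of_le hx.1.le, Set.uIcc_of_le zero_le_one]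
      exact Set.Icc_subset_Icc le_rfl hx.2.le)
    have hIy : IntervalIntegrable h' volume 0 y := hII.mono_set (by
      rw [Set.uIcc_of_le (lt_trans hx.1 hxy).le, Set.uIcc_of_le zero_le_one]
      exact Set.Icc_subset_Icc le_rfl hy.2.le)
    have e3 : (∫ t in x..y, h' t) = h y - h x := by
      rw [← intervalIntegral.integral_interval_sub_left hIy hIx,
        ← hAC y ⟨(lt_trans hx.1 hxy).le, hy.2.le⟩, ← hAC x ⟨hx.1.le, hx.2.le⟩]
    rw [setAverage_eq, e1, e2, e3, Real.volume_real_Icc_of_le (by linarith : x ≤ y), smul_eq_mul]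
    ring
  -- h' is antitone on good points
  have hanti : ∀ x₁ ∈ Set.Ioo (0:ℝ) 1, ∀ x₂ ∈ Set.Ioo (0:ℝ) 1,
      P x₁ → P x₂ → x₁ < x₂ → h' x₂ ≤ h' x₁ := by
    intro x₁ hx₁ x₂ hx₂ hP₁ hP₂ hlt
    have hx₁I : x₁ ∈ Set.Icc (0:ℝ) 1 := ⟨hx₁.1.le, hx₁.2.le⟩
    have hx₂I : x₂ ∈ Set.Icc (0:ℝ) 1 := ⟨hx₂.1.le, hx₂.2.le⟩
    have step2 : (h x₂ - h x₁) / (x₂ - x₁) ≤ h' x₁ := by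
      refine ge_of_tendsto (hslope x₁ hx₁ hP₁) ?_
      filter_upwards [Ioo_mem_nhdsGT_of_mem (⟨le_rfl, hlt⟩ : x₁ ∈ Set.Ico x₁ x₂)] with y hy
      have hyI : y ∈ Set.Icc (0:ℝ) 1 :=
        ⟨(lt_trans hx₁.1 hy.1).le, (lt_of_lt_of_le hy.2 hx₂.2.le).le⟩
      have hsec := hconc.neg.secant_mono hx₁I hyI hx₂I hy.1.ne' hlt.ne' hy.2.le
      simp only [Pi.neg_apply] at hsec
      have e1 : (-h y - -h x₁) / (y - x₁) = -((h y - h x₁) / (y - x₁)) := by ring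
      have e2 : (-h x₂ - -h x₁) / (x₂ - x₁) = -((h x₂ - h x₁) / (x₂ - x₁)) := by ring
      rw [e1, e2, neg_le_neg_iff] at hsec
      exact hsec
    have step1 : h' x₂ ≤ (h x₂ - h x₁) / (x₂ - x₁) := by
      refine le_of_tendsto (hslope x₂ hx₂ hP₂) ?_
      filter_upwards [Ioo_mem_nhdsGT_of_mem (⟨le_rfl, hx₂.2⟩ : x₂ ∈ Set.Ico x₂ 1)] with y hy
      have hyI : y ∈ Set.Icc (0:ℝ) 1 := ⟨(lt_trans hx₂.1 hy.1).le, hy.2.le⟩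
      exact hconc.slope_anti_adjacent hx₁I hyI hlt hy.1
    linarith
  -- transfer the a.e. property through the reflection p ↦ 1 - p
  have hrefl : MeasurePreserving (fun p : ℝ => 1 - p) volume volume := by
    have := (measurePreserving_add_left (volume : Measure ℝ) 1).comp
        (Measure.measurePreserving_neg (volume : Measure ℝ))
    simpa [Function.comp_def, sub_eq_add_neg] using this
  have haeP : ∀ᵐ p ∂(volume : Measure ℝ), P (1 - p) :=
    hrefl.quasiMeasurePreserving.tendsto_ae.eventually hLeb
  set B : Set ℝ := {p | p ∈ Set.Ioo (0:ℝ) 1 ∧ P (1 - p)} with hB_def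
  have hBae : ∀ᵐ p ∂(volume.restrict (Set.Ioo (0:ℝ) 1)), p ∈ B := by
    filter_upwards [ae_restrict_mem measurableSet_Ioo, ae_restrict_of_ae haeP] with p hp hp'
    exact ⟨hp, hp'⟩
  -- Qstar is monotone on B
  have hQmono : ∀ p ∈ B, ∀ q ∈ B, p ≤ q → Qstar p ≤ Qstar q := by
    intro p hp q hq hpq
    rcases eq_or_lt_of_le hpq with rfl | hlt
    · exact le_rfl
    have h1p : (1:ℝ) - p ∈ Set.Ioo (0:ℝ) 1 := ⟨by linarith [hp.1.2], by linarith [hp.1.1]⟩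
    have h1q : (1:ℝ) - q ∈ Set.Ioo (0:ℝ) 1 := ⟨by linarith [hq.1.2], by linarith [hq.1.1]⟩
    have key : h' (1 - p) ≤ h' (1 - q) :=
      hanti (1 - q) h1q (1 - p) h1p hq.2 hp.2 (by linarith)
    show m + s * h' (1 - p) / norm2 ≤ m + s * h' (1 - q) / norm2
    gcongr
  -- B meets every subinterval
  have hBne : ∀ a b : ℝ, 0 ≤ a → a < b → b ≤ 1 → (B ∩ Set.Ioo a b).Nonempty := by
    intro a b ha hab hb
    rw [Set.nonempty_iff_ne_empty]
    intro hemp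
    have hsub2 : Set.Ioo a b ⊆ {p | p ∉ B} := fun x hx hxB =>
      Set.eq_empty_iff_forall_notMem.1 hemp x ⟨hxB, hx⟩
    have h0' : volume.restrict (Set.Ioo (0:ℝ) 1) {p | p ∉ B} = 0 := ae_iff.1 hBae
    have hz : volume.restrict (Set.Ioo (0:ℝ) 1) (Set.Ioo a b) = 0 :=
      measure_mono_null hsub2 h0'
    rw [Measure.restrict_apply measurableSet_Ioo] at hz
    have hss : Set.Ioo a b ∩ Set.Ioo (0:ℝ) 1 = Set.Ioo a b := Set.inter_eq_left.2
      (fun x hx => ⟨lt_of_le_of_lt ha hx.1, lt_of_lt_of_le hx.2 hb⟩)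
    rw [hss, Real.volume_Ioo] at hz
    have := ENNReal.ofReal_eq_zero.1 hz
    linarith
  -- monotone extension of Qstar from B
  set g : ℝ → ℝ := fun p => sInf (Qstar '' (B ∩ Set.Ici p)) with hgdef
  have hbdd : ∀ p ∈ Set.Ioo (0:ℝ) 1, BddBelow (Qstar '' (B ∩ Set.Ici p)) := by
    intro p hp
    obtain ⟨b, hbB, hbI⟩ := hBne 0 p le_rfl hp.1 hp.2.le
    refine ⟨Qstar b, ?_⟩
    rintro z ⟨q, hq, rfl⟩
    exact hQmono b hbB q hq.1 (le_trans hbI.2.le hq.2)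
  have hnon : ∀ p ∈ Set.Ioo (0:ℝ) 1, (Qstar '' (B ∩ Set.Ici p)).Nonempty := by
    intro p hp
    obtain ⟨q, hqB, hqI⟩ := hBne p 1 hp.1.le hp.2 le_rfl
    exact ⟨Qstar q, q, ⟨hqB, hqI.1.le⟩, rfl⟩
  refine ⟨g, ?_, ?_⟩
  · intro p hp p' hp' hle
    exact csInf_le_csInf (hbdd p hp) (hnon p' hp')
      (Set.image_mono (Set.inter_subset_inter_right _ (Set.Ici_subset_Ici.2 hle)))
  · filter_upwards [hBae] with p hp
    have hpIoo : p ∈ Set.Ioo (0:ℝ) 1 := hp.1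
    refine le_antisymm ?_ ?_
    · refine le_csInf (hnon p hpIoo) ?_
      rintro z ⟨q, hq, rfl⟩
      exact hQmono p hp q hq.1 hq.2
    · exact csInf_le (hbdd p hpIoo) ⟨p, ⟨hp, Set.self_mem_Ici⟩, rfl⟩
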